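/- The Volterra integration operator G on L^∞(0,1) is of positive type with constant κ = 2: for every β > 0 the operator G + βI : L^∞(0,1) → L^∞(0,1) is bijective and its inverse satisfies the operator norm bound ‖(G + βI)^{-1}‖ ≤ 2/β. -/

import Mathlib

open MeasureTheory Set
open scoped ENNReal NNReal


lemma tri_swap (c : ℝ) {w : ℝ → ℝ} (hw : Measurable w) {x M : ℝ} (hx : 0 ≤ x)
    (hb : ∀ t ∈ Set.Icc 0 x, |w t| ≤ M) :
    ∫ s in (0:ℝ)..x, Real.exp (c*s) * ∫ t in (0:ℝ)..s, w t
      = ∫ t in (0:ℝ)..x, (∫ s in t..x, Real.exp (c*s)) * w t := by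
  set I := Set.Ioc (0:ℝ) x with hI
  set F : ℝ → ℝ → ℝ := fun s t => if t ≤ s then Real.exp (c*s) * w t else 0 with hF
  have hM : 0 ≤ M := le_trans (abs_nonneg _) (hb 0 ⟨le_refl _, hx⟩)
  have hFmeas : Measurable (Function.uncurry F) := by
    apply Measurable.ite
    · exact measurableSet_le measurable_snd measurable_fst
    · exact ((measurable_fst.const_mul c).exp).mul (hw.comp measurable_snd)
    · exact measurable_const
  have hInt : Integrable (Function.uncurry F)
      ((volume.restrict I).prod (volume.restrict I)) := by
    refine Integrable.mono' (integrable_const (Real.exp (|c| * x) * M))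
      hFmeas.aestronglyMeasurable ?_
    rw [Measure.prod_restrict]
    filter_upwards [ae_restrict_mem (measurableSet_Ioc.prod measurableSet_Ioc)] with p hp
    obtain ⟨hp1, hp2⟩ := hp
    by_cases h : p.2 ≤ p.1
    · simp only [Function.uncurry, hF, if_pos h]
      rw [Real.norm_eq_abs, abs_mul, abs_of_pos (Real.exp_pos _)]
      have h1 : Real.exp (c * p.1) ≤ Real.exp (|c| * x) := by
        apply Real.exp_le_exp.2
        calc c * p.1 ≤ |c * p.1| := le_abs_self _
        _ = |c| * |p.1| := abs_mul _ _
        _ ≤ |c| * x := by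
            apply mul_le_mul_of_nonneg_left _ (abs_nonneg c)
            rw [abs_of_pos hp1.1]; exact hp1.2
      exact mul_le_mul h1 (hb p.2 ⟨hp2.1.le, hp2.2⟩) (abs_nonneg _) (Real.exp_pos _).le
    · simp only [Function.uncurry, hF, if_neg h, norm_zero]
      positivity
  have step1 : ∫ s in (0:ℝ)..x, Real.exp (c*s) * ∫ t in (0:ℝ)..s, w t
      = ∫ s in I, ∫ t in I, F s t := by
    rw [intervalIntegral.integral_of_le hx]
    apply setIntegral_congr_fun measurableSet_Ioc
    intro s hs
    dsimp only
    have h1 : ∫ t in I, F s t = Real.exp (c*s) * ∫ t in I, (Set.Ioc (0:ℝ) s).indicator w t := by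
      rw [← integral_const_mul]
      apply setIntegral_congr_fun measurableSet_Ioc
      intro t ht
      simp only [hF, Set.indicator, Set.mem_Ioc]
      by_cases h : t ≤ s
      · rw [if_pos h, if_pos ⟨ht.1, h⟩]
      · rw [if_neg h, if_neg (by tauto), mul_zero]
    rw [h1, setIntegral_indicator measurableSet_Ioc,
      Set.inter_eq_self_of_subset_right (Set.Ioc_subset_Ioc le_rfl hs.2),
      intervalIntegral.integral_of_le hs.1.le]
  have step2 : ∫ s in I, ∫ t in I, F s t = ∫ t in I, ∫ s in I, F s t :=
    integral_integral_swap hInt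
  have step3 : ∫ t in I, ∫ s in I, F s t
      = ∫ t in (0:ℝ)..x, (∫ s in t..x, Real.exp (c*s)) * w t := by
    rw [intervalIntegral.integral_of_le hx]
    apply setIntegral_congr_fun measurableSet_Ioc
    intro t ht
    dsimp only
    have h1 : ∀ s, F s t = (Set.Ici t).indicator (fun s => Real.exp (c*s) * w t) s := by
      intro s
      simp only [hF, Set.indicator, Set.mem_Ici]
    simp_rw [h1]
    rw [setIntegral_indicator measurableSet_Ici]
    have h2 : I ∩ Set.Ici t = Set.Icc t x := by
      ext s; simp only [hI, Set.mem_inter_iff, Set.mem_Ioc, Set.mem_Ici, Set.mem_Icc]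
      constructor
      · rintro ⟨⟨_, h2⟩, h3⟩; exact ⟨h3, h2⟩
      · rintro ⟨h2, h3⟩; exact ⟨⟨lt_of_lt_of_le ht.1 h2, h3⟩, h2⟩
    rw [h2, integral_Icc_eq_integral_Ioc, ← intervalIntegral.integral_of_le ht.2,
      ← intervalIntegral.integral_mul_const]
  rw [step1, step2, step3]


lemma exp_int {c : ℝ} (hc : c ≠ 0) (t x : ℝ) :
    ∫ s in t..x, Real.exp (c*s) = (Real.exp (c*x) - Real.exp (c*t))/c := by
  have := intervalIntegral.integral_comp_mul_left (a := t) (b := x) (f := Real.exp) hc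
  rw [this, integral_exp, smul_eq_mul]
  field_simp

lemma intInt {w : ℝ → ℝ} {M : ℝ} (hw : Measurable w) (hb : ∀ t, |w t| ≤ M) (a b : ℝ) :
    IntervalIntegrable w volume a b := by
  rw [intervalIntegrable_iff]
  have hc : IntegrableOn (fun _ => M) (Set.uIoc a b) volume :=
    integrableOn_const measure_Ioc_lt_top.ne
  refine Integrable.mono' hc hw.aestronglyMeasurable ?_
  exact Filter.Eventually.of_forall fun t => by rw [Real.norm_eq_abs]; exact hb t

lemma bdd_rep {f : ℝ → ℝ} {μ : Measure ℝ} (hf : MemLp f ⊤ μ) :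
    ∃ g : ℝ → ℝ, Measurable g ∧ (∀ t, |g t| ≤ (eLpNorm f ⊤ μ).toReal) ∧ f =ᵐ[μ] g := by
  obtain ⟨g₀, hg₀meas, hfg₀⟩ := hf.1
  set M := (eLpNorm f ⊤ μ).toReal with hM
  have hM0 : 0 ≤ M := ENNReal.toReal_nonneg
  have hae : ∀ᵐ t ∂μ, |f t| ≤ M := by
    have h1 : ∀ᵐ t ∂μ, (‖f t‖₊ : ℝ≥0∞) ≤ eLpNorm f ⊤ μ := by
      have := ae_le_eLpNormEssSup (f := f) (μ := μ); rw [eLpNorm_exponent_top]; exact this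
    filter_upwards [h1] with t ht
    have hN : eLpNorm f ⊤ μ ≠ ⊤ := hf.2.ne
    calc |f t| = ((‖f t‖₊ : ℝ≥0∞)).toReal := by simp [Real.norm_eq_abs]
    _ ≤ M := ENNReal.toReal_mono hN ht
  classical
  refine ⟨fun t => if |g₀ t| ≤ M then g₀ t else 0, ?_, ?_, ?_⟩
  · exact Measurable.ite (measurableSet_le (hg₀meas.measurable.abs) measurable_const)
      hg₀meas.measurable measurable_const
  · intro t
    by_cases h : |g₀ t| ≤ M
    · simpa [h]
    · simpa [h]
  · filter_upwards [hfg₀, hae] with t h1 h2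
    have : |g₀ t| ≤ M := by rw [← h1]; exact h2
    simp [this, h1]

lemma ae_abs_le {f : ℝ → ℝ} {μ : Measure ℝ} (hN : eLpNorm f ⊤ μ ≠ ⊤) :
    ∀ᵐ t ∂μ, |f t| ≤ (eLpNorm f ⊤ μ).toReal := by
  have h1 : ∀ᵐ t ∂μ, (‖f t‖₊ : ℝ≥0∞) ≤ eLpNorm f ⊤ μ := by
    have := ae_le_eLpNormEssSup (f := f) (μ := μ); rw [eLpNorm_exponent_top]; exact this
  filter_upwards [h1] with t ht
  calc |f t| = ((‖f t‖₊ : ℝ≥0∞)).toReal := by simp [Real.norm_eq_abs]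
  _ ≤ _ := ENNReal.toReal_mono hN ht

lemma idA {β M : ℝ} (hβ : 0 < β) {w : ℝ → ℝ} (hw : Measurable w) (hb : ∀ t, |w t| ≤ M)
    {x : ℝ} (hx : 0 ≤ x) :
    ∫ t in (0:ℝ)..x, Real.exp ((t-x)/β) * ((∫ r in (0:ℝ)..t, w r) + β * w t)
      = β * ∫ t in (0:ℝ)..x, w t := by
  have hc : (β⁻¹ : ℝ) ≠ 0 := inv_ne_zero hβ.ne'
  have hWcont : Continuous (fun s : ℝ => ∫ r in (0:ℝ)..s, w r) :=
    intervalIntegral.continuous_primitive (intInt hw hb) 0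
  have hcont1 : Continuous fun t : ℝ => Real.exp (β⁻¹*t) := by continuity
  have T := tri_swap β⁻¹ hw hx (fun t _ => hb t)
  simp only [exp_int hc] at T
  have i1 : IntervalIntegrable (fun t : ℝ => Real.exp (β⁻¹*t) * ∫ r in (0:ℝ)..t, w r)
      volume 0 x := (hcont1.mul hWcont).intervalIntegrable _ _
  have i2 : IntervalIntegrable (fun t : ℝ => Real.exp (β⁻¹*t) * w t) volume 0 x :=
    (intInt hw hb 0 x).continuousOn_mul hcont1.continuousOn
  have hpt : EqOn (fun t : ℝ => Real.exp ((t-x)/β) * ((∫ r in (0:ℝ)..t, w r) + β * w t))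
      (fun t : ℝ => Real.exp (-x/β) * (Real.exp (β⁻¹*t) * ∫ r in (0:ℝ)..t, w r)
        + (β * Real.exp (-x/β)) * (Real.exp (β⁻¹*t) * w t)) (uIcc 0 x) := by
    intro t _
    have hexp : Real.exp ((t-x)/β) = Real.exp (-x/β) * Real.exp (β⁻¹*t) := by
      rw [← Real.exp_add]; congr 1; field_simp; ring
    simp only [hexp]; ring
  rw [intervalIntegral.integral_congr hpt,
    intervalIntegral.integral_add (i1.const_mul _) (i2.const_mul _),
    intervalIntegral.integral_const_mul, intervalIntegral.integral_const_mul, T]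
  have hpt2 : EqOn (fun t : ℝ => ((Real.exp (β⁻¹*x) - Real.exp (β⁻¹*t))/β⁻¹) * w t)
      (fun t : ℝ => (β * Real.exp (β⁻¹*x)) * w t - β * (Real.exp (β⁻¹*t) * w t))
      (uIcc 0 x) := by
    intro t _
    have : (Real.exp (β⁻¹*x) - Real.exp (β⁻¹*t))/β⁻¹
        = β * Real.exp (β⁻¹*x) - β * Real.exp (β⁻¹*t) := by field_simp
    simp only [this]; ring
  rw [intervalIntegral.integral_congr hpt2,
    intervalIntegral.integral_sub ((intInt hw hb 0 x).const_mul _) (i2.const_mul _),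
    intervalIntegral.integral_const_mul, intervalIntegral.integral_const_mul]
  have he : Real.exp (-x/β) * Real.exp (β⁻¹*x) = 1 := by
    rw [← Real.exp_add]
    have : -x/β + β⁻¹*x = 0 := by field_simp; ring
    rw [this, Real.exp_zero]
  linear_combination (β * ∫ t in (0:ℝ)..x, w t) * he

lemma idB {β M : ℝ} (hβ : 0 < β) {w : ℝ → ℝ} (hw : Measurable w) (hb : ∀ t, |w t| ≤ M)
    {x : ℝ} (hx : 0 ≤ x) :
    ∫ s in (0:ℝ)..x, (1/β) * (Real.exp (-s/β) * ∫ t in (0:ℝ)..s, Real.exp (β⁻¹*t) * w t)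
      = (∫ t in (0:ℝ)..x, w t)
        - β * ((1/β) * (Real.exp (-x/β) * ∫ t in (0:ℝ)..x, Real.exp (β⁻¹*t) * w t)) := by
  have hc' : (-β⁻¹ : ℝ) ≠ 0 := neg_ne_zero.2 (inv_ne_zero hβ.ne')
  have hcont1 : Continuous fun t : ℝ => Real.exp (β⁻¹*t) := by continuity
  have hM0 : 0 ≤ M := le_trans (abs_nonneg _) (hb 0)
  have hwt : Measurable (fun t : ℝ => Real.exp (β⁻¹*t) * w t) := hcont1.measurable.mul hw
  have hbt : ∀ t ∈ Set.Icc (0:ℝ) x, |Real.exp (β⁻¹*t) * w t| ≤ Real.exp (β⁻¹*x) * M := by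
    intro t ht
    rw [abs_mul, abs_of_pos (Real.exp_pos _)]
    exact mul_le_mul (Real.exp_le_exp.2 (by
      exact mul_le_mul_of_nonneg_left ht.2 (inv_nonneg.2 hβ.le))) (hb t) (abs_nonneg _)
      (Real.exp_pos _).le
  have T := tri_swap (-β⁻¹) hwt hx hbt
  simp only [exp_int hc'] at T
  have h1 : EqOn
      (fun s : ℝ => (1/β) * (Real.exp (-s/β) * ∫ t in (0:ℝ)..s, Real.exp (β⁻¹*t) * w t))
      (fun s : ℝ => (1/β) * (Real.exp (-β⁻¹*s) * ∫ t in (0:ℝ)..s, Real.exp (β⁻¹*t) * w t))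
      (uIcc 0 x) := by
    intro s _
    have : -s/β = -β⁻¹*s := by ring
    simp only [this]
  rw [intervalIntegral.integral_congr h1]
  have hVcont : Continuous (fun s : ℝ => ∫ t in (0:ℝ)..s, Real.exp (β⁻¹*t) * w t) := by
    apply intervalIntegral.continuous_primitive
    intro a b
    exact (intInt hw hb a b).continuousOn_mul hcont1.continuousOn
  have i1 : IntervalIntegrable
      (fun s : ℝ => Real.exp (-β⁻¹*s) * ∫ t in (0:ℝ)..s, Real.exp (β⁻¹*t) * w t)
      volume 0 x := (((by continuity : Continuous fun s : ℝ => Real.exp (-β⁻¹*s))).mul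
        hVcont).intervalIntegrable _ _
  rw [intervalIntegral.integral_const_mul, T]
  have h2 : EqOn
      (fun t : ℝ => ((Real.exp (-β⁻¹*x) - Real.exp (-β⁻¹*t))/(-β⁻¹)) * (Real.exp (β⁻¹*t) * w t))
      (fun t : ℝ => β * w t - (β * Real.exp (-β⁻¹*x)) * (Real.exp (β⁻¹*t) * w t))
      (uIcc 0 x) := by
    intro t _
    have h12 : Real.exp (-β⁻¹*t) * Real.exp (β⁻¹*t) = 1 := by
      rw [← Real.exp_add, show (-β⁻¹)*t + β⁻¹*t = 0 by ring, Real.exp_zero]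
    dsimp only
    rw [div_neg, div_inv_eq_mul]
    linear_combination (β * w t) * h12
  rw [intervalIntegral.integral_congr h2,
    intervalIntegral.integral_sub ((intInt hw hb 0 x).const_mul _)
      (((intInt hw hb 0 x).continuousOn_mul hcont1.continuousOn).const_mul _),
    intervalIntegral.integral_const_mul, intervalIntegral.integral_const_mul]
  have : -x/β = -β⁻¹*x := by ring
  rw [this]
  field_simp

/-- The Volterra integration operator `(Gu)(x) = ∫_0^x u(ξ) dξ` on `L^∞(0,1)` is of positive
type with constant `κ = 2`: for every `β > 0`, the operator `G + βI` is bijective on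
`L^∞(0,1)` (surjectivity is stated explicitly; injectivity follows from the norm bound)
and its inverse satisfies `‖(G + βI)^{-1}‖ ≤ 2/β`, i.e.
`‖u‖_∞ ≤ (2/β) ‖(G + βI)u‖_∞` for all `u ∈ L^∞(0,1)`. -/
theorem volterra_positiveType_constant_two (β : ℝ) (hβ : 0 < β) :
    (∀ f : ℝ → ℝ, MemLp f ⊤ (volume.restrict (Set.Ioo 0 1)) →
      ∃ u : ℝ → ℝ, MemLp u ⊤ (volume.restrict (Set.Ioo 0 1)) ∧
        (fun x => (∫ t in (0:ℝ)..x, u t) + β * u x) =ᵐ[volume.restrict (Set.Ioo 0 1)] f) ∧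
    (∀ u : ℝ → ℝ, MemLp u ⊤ (volume.restrict (Set.Ioo 0 1)) →
      eLpNorm u ⊤ (volume.restrict (Set.Ioo 0 1)) ≤
        ENNReal.ofReal (2 / β) *
          eLpNorm (fun x => (∫ t in (0:ℝ)..x, u t) + β * u x) ⊤
            (volume.restrict (Set.Ioo 0 1))) := by
  have hcont1 : Continuous fun t : ℝ => Real.exp (β⁻¹*t) := by continuity
  constructor
  · -- surjectivity
    intro f hf
    obtain ⟨g, hgmeas, hgb, hfg⟩ := bdd_rep hf
    set M := (eLpNorm f ⊤ (volume.restrict (Set.Ioo 0 1))).toReal with hM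
    have hM0 : 0 ≤ M := ENNReal.toReal_nonneg
    set v : ℝ → ℝ :=
      fun y => (1/β) * (Real.exp (-y/β) * ∫ t in (0:ℝ)..y, Real.exp (β⁻¹*t) * g t) with hv
    have hVcont : Continuous (fun y : ℝ => ∫ t in (0:ℝ)..y, Real.exp (β⁻¹*t) * g t) := by
      apply intervalIntegral.continuous_primitive
      intro a b
      exact (intInt hgmeas hgb a b).continuousOn_mul hcont1.continuousOn
    have hvcont : Continuous v := by
      apply continuous_const.mul
      exact (by continuity : Continuous fun y : ℝ => Real.exp (-y/β)).mul hVcont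
    set u : ℝ → ℝ := fun y => (g y - v y)/β with hu
    have hu_meas : Measurable u := (hgmeas.sub hvcont.measurable).div_const β
    have hvb : ∀ y ∈ Set.Icc (0:ℝ) 1, |v y| ≤ (1/β) * (Real.exp β⁻¹ * M) := by
      intro y hy
      rw [hv]
      dsimp only
      rw [abs_mul, abs_mul, abs_of_nonneg (by positivity : (0:ℝ) ≤ 1/β),
        abs_of_pos (Real.exp_pos _)]
      have h1 : |∫ t in (0:ℝ)..y, Real.exp (β⁻¹*t) * g t| ≤ (Real.exp β⁻¹ * M) * |y - 0| := by
        rw [← Real.norm_eq_abs]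
        apply intervalIntegral.norm_integral_le_of_norm_le_const
        intro t ht
        rw [uIoc_of_le hy.1] at ht
        rw [Real.norm_eq_abs, abs_mul, abs_of_pos (Real.exp_pos _)]
        apply mul_le_mul _ (hgb t) (abs_nonneg _) (Real.exp_pos _).le
        apply Real.exp_le_exp.2
        calc β⁻¹ * t ≤ β⁻¹ * 1 := by
              apply mul_le_mul_of_nonneg_left (le_trans ht.2 hy.2) (by positivity)
        _ = β⁻¹ := mul_one _
      have h2 : Real.exp (-y/β) ≤ 1 := by
        rw [show (1:ℝ) = Real.exp 0 by rw [Real.exp_zero]]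
        apply Real.exp_le_exp.2
        apply div_nonpos_of_nonpos_of_nonneg (neg_nonpos.2 hy.1) hβ.le
      calc (1/β) * (Real.exp (-y/β) * |∫ t in (0:ℝ)..y, Real.exp (β⁻¹*t) * g t|)
          ≤ (1/β) * (1 * ((Real.exp β⁻¹ * M) * |y - 0|)) := by
            apply mul_le_mul_of_nonneg_left _ (by positivity)
            exact mul_le_mul h2 h1 (abs_nonneg _) one_pos.le
      _ ≤ (1/β) * (Real.exp β⁻¹ * M) := by
            rw [one_mul]
            apply mul_le_mul_of_nonneg_left _ (by positivity)
            rw [sub_zero, abs_of_nonneg hy.1]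
            calc Real.exp β⁻¹ * M * y ≤ Real.exp β⁻¹ * M * 1 := by
                  apply mul_le_mul_of_nonneg_left hy.2 (by positivity)
            _ = Real.exp β⁻¹ * M := mul_one _
    have hmem : MemLp u ⊤ (volume.restrict (Set.Ioo 0 1)) := by
      apply memLp_top_of_bound hu_meas.aestronglyMeasurable
        ((M + (1/β) * (Real.exp β⁻¹ * M))/β)
      filter_upwards [ae_restrict_mem measurableSet_Ioo] with y hy
      rw [hu]
      dsimp only
      rw [Real.norm_eq_abs, abs_div, abs_of_pos hβ]
      gcongr
      calc |g y - v y| ≤ |g y| + |v y| := abs_sub (g y) (v y)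
      _ ≤ M + (1/β) * (Real.exp β⁻¹ * M) :=
        add_le_add (hgb y) (hvb y ⟨hy.1.le, hy.2.le⟩)
    have key : ∀ y : ℝ, 0 ≤ y → (∫ t in (0:ℝ)..y, u t) = v y := by
      intro y hy
      have hB : ∫ s in (0:ℝ)..y, v s = (∫ t in (0:ℝ)..y, g t) - β * v y :=
        idB hβ hgmeas hgb hy
      have hsplit : ∫ t in (0:ℝ)..y, u t
          = (1/β) * (∫ t in (0:ℝ)..y, g t) - (1/β) * ∫ t in (0:ℝ)..y, v t := by
        rw [← intervalIntegral.integral_const_mul, ← intervalIntegral.integral_const_mul,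
          ← intervalIntegral.integral_sub ((intInt hgmeas hgb 0 y).const_mul _)
            ((hvcont.intervalIntegrable 0 y).const_mul _)]
        apply intervalIntegral.integral_congr
        intro t _
        rw [hu]
        dsimp only
        ring
      rw [hsplit, hB]
      field_simp
      ring
    refine ⟨u, hmem, ?_⟩
    filter_upwards [ae_restrict_mem measurableSet_Ioo, hfg] with y hy hfy
    show (∫ t in (0:ℝ)..y, u t) + β * u y = f y
    rw [hfy, key y hy.1.le]
    simp only [hu]
    field_simp
    ring
  · -- norm bound
    intro u hu
    obtain ⟨w, hwmeas, hwb, huw⟩ := bdd_rep hu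
    set Mu := (eLpNorm u ⊤ (volume.restrict (Set.Ioo 0 1))).toReal with hMu
    have hMu0 : 0 ≤ Mu := ENNReal.toReal_nonneg
    have hWcont : Continuous (fun s : ℝ => ∫ r in (0:ℝ)..s, w r) :=
      intervalIntegral.continuous_primitive (intInt hwmeas hwb) 0
    have hEw : volume ({t | ¬ u t = w t} ∩ Set.Ioo 0 1) = 0 := by
      have h0 := ae_iff.1 huw
      rwa [Measure.restrict_apply' measurableSet_Ioo] at h0
    have hint_eq : ∀ y ∈ Set.Icc (0:ℝ) 1,
        (∫ t in (0:ℝ)..y, u t) = ∫ t in (0:ℝ)..y, w t := by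
      intro y hy
      apply intervalIntegral.integral_congr_ae
      rw [ae_iff]
      refine measure_mono_null (fun t ht => ?_)
        (measure_union_null hEw (measure_singleton y))
      · 
        simp only [Set.mem_setOf_eq, not_forall, Classical.not_imp] at ht
        obtain ⟨ht1, ht2⟩ := ht
        rw [uIoc_of_le hy.1] at ht1
        by_cases hty : t = y
        · exact Or.inr hty
        · have hlty : t < y := lt_of_le_of_ne ht1.2 hty
          exact Or.inl ⟨ht2, ht1.1, lt_of_lt_of_le hlty hy.2⟩
    have hFuw : (fun x => (∫ t in (0:ℝ)..x, u t) + β * u x)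
        =ᵐ[volume.restrict (Set.Ioo 0 1)]
        (fun x => (∫ t in (0:ℝ)..x, w t) + β * w x) := by
      filter_upwards [ae_restrict_mem measurableSet_Ioo, huw] with x hx hux
      show (∫ t in (0:ℝ)..x, u t) + β * u x = (∫ t in (0:ℝ)..x, w t) + β * w x
      rw [hint_eq x ⟨hx.1.le, hx.2.le⟩, hux]
    rw [eLpNorm_congr_ae hFuw]
    set N := eLpNorm (fun x => (∫ t in (0:ℝ)..x, w t) + β * w x) ⊤
      (volume.restrict (Set.Ioo 0 1)) with hN
    by_cases hNt : N = ⊤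
    · rw [hNt, ENNReal.mul_top (by
        simp only [ne_eq, ENNReal.ofReal_eq_zero, not_le]
        positivity)]
      exact le_top
    set N' := N.toReal with hN'
    have hN'0 : 0 ≤ N' := ENNReal.toReal_nonneg
    have hbFw0 := ae_abs_le (μ := volume.restrict (Set.Ioo 0 1)) hNt
    rw [← hN, ← hN'] at hbFw0
    have hbFw := hbFw0
    rw [ae_restrict_iff' measurableSet_Ioo] at hbFw
    have hkey : ∀ᵐ x ∂(volume.restrict (Set.Ioo 0 1)), ‖w x‖ ≤ 2/β * N' := by
      filter_upwards [ae_restrict_mem measurableSet_Ioo, hbFw0] with x hx hFx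
      have hx0 : (0:ℝ) ≤ x := hx.1.le
      have hA := idA hβ hwmeas hwb hx0
      -- kernel integral value
      have hc : (β⁻¹ : ℝ) ≠ 0 := inv_ne_zero hβ.ne'
      have he : Real.exp (-x/β) * Real.exp (β⁻¹*x) = 1 := by
        rw [← Real.exp_add, show -x/β + β⁻¹*x = 0 by field_simp; ring, Real.exp_zero]
      have hker : ∫ t in (0:ℝ)..x, Real.exp ((t-x)/β) = β * (1 - Real.exp (-x/β)) := by
        have h1 : EqOn (fun t : ℝ => Real.exp ((t-x)/β))
            (fun t : ℝ => Real.exp (-x/β) * Real.exp (β⁻¹*t)) (uIcc 0 x) := by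
          intro t _
          dsimp only
          rw [← Real.exp_add]
          congr 1
          field_simp
          ring
        rw [intervalIntegral.integral_congr h1, intervalIntegral.integral_const_mul,
          exp_int hc 0 x, mul_zero, Real.exp_zero]
        rw [div_inv_eq_mul]
        linear_combination β * he
      have hKcont : Continuous (fun t : ℝ => Real.exp ((t-x)/β)) := by continuity
      -- interval integrability of the big integrand
      have hFwII : IntervalIntegrable
          (fun t : ℝ => (∫ r in (0:ℝ)..t, w r) + β * w t) volume 0 x :=
        (hWcont.intervalIntegrable 0 x).add ((intInt hwmeas hwb 0 x).const_mul β)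
      have hprodII : IntervalIntegrable
          (fun t : ℝ => Real.exp ((t-x)/β) * ((∫ r in (0:ℝ)..t, w r) + β * w t))
          volume 0 x := hFwII.continuousOn_mul hKcont.continuousOn
      have hKb : |∫ t in (0:ℝ)..x,
          Real.exp ((t-x)/β) * ((∫ r in (0:ℝ)..t, w r) + β * w t)| ≤ N' * β := by
        have hmono : (∫ t in (0:ℝ)..x,
              |Real.exp ((t-x)/β) * ((∫ r in (0:ℝ)..t, w r) + β * w t)|)
            ≤ ∫ t in (0:ℝ)..x, Real.exp ((t-x)/β) * N' := by
          apply intervalIntegral.integral_mono_ae_restrict hx0 hprodII.abs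
            ((hKcont.mul continuous_const).intervalIntegrable 0 x)
          have h3 : ∀ᵐ t : ℝ ∂volume, t ≠ 0 := by
            have h4 : volume ({0} : Set ℝ) = 0 := measure_singleton 0
            rw [ae_iff]
            convert h4 using 2
            ext t; simp
          rw [Filter.EventuallyLE, ae_restrict_iff' measurableSet_Icc]
          filter_upwards [hbFw, h3] with t h2 h3t ht
          have ht1 : t ∈ Set.Ioo (0:ℝ) 1 :=
            ⟨lt_of_le_of_ne ht.1 (Ne.symm h3t), lt_of_le_of_lt ht.2 hx.2⟩
          show |Real.exp ((t-x)/β) * ((∫ r in (0:ℝ)..t, w r) + β * w t)|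
            ≤ Real.exp ((t-x)/β) * N'
          rw [abs_mul, abs_of_pos (Real.exp_pos _)]
          exact mul_le_mul_of_nonneg_left (h2 ht1) (Real.exp_pos _).le
        calc |∫ t in (0:ℝ)..x,
            Real.exp ((t-x)/β) * ((∫ r in (0:ℝ)..t, w r) + β * w t)|
            ≤ ∫ t in (0:ℝ)..x,
              |Real.exp ((t-x)/β) * ((∫ r in (0:ℝ)..t, w r) + β * w t)| :=
              intervalIntegral.abs_integral_le_integral_abs hx0
        _ ≤ ∫ t in (0:ℝ)..x, Real.exp ((t-x)/β) * N' := hmono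
        _ = (∫ t in (0:ℝ)..x, Real.exp ((t-x)/β)) * N' :=
              intervalIntegral.integral_mul_const _ _
        _ = (β * (1 - Real.exp (-x/β))) * N' := by rw [hker]
        _ ≤ β * N' := by nlinarith [mul_nonneg (mul_nonneg hβ.le hN'0) (Real.exp_pos (-x/β)).le]
        _ = N' * β := mul_comm _ _
      rw [hA] at hKb
      rw [abs_mul, abs_of_pos hβ] at hKb
      have hWb : |∫ t in (0:ℝ)..x, w t| ≤ N' := by
        apply le_of_mul_le_mul_left _ hβ
        calc β * |∫ t in (0:ℝ)..x, w t| ≤ N' * β := hKb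
        _ = β * N' := mul_comm _ _
      have hwx : β * w x = ((∫ t in (0:ℝ)..x, w t) + β * w x) - ∫ t in (0:ℝ)..x, w t := by
        ring
      rw [Real.norm_eq_abs]
      rw [show (2:ℝ)/β * N' = 2 * N'/β by ring, le_div_iff₀ hβ]
      calc |w x| * β = |β * w x| := by rw [abs_mul, abs_of_pos hβ]; ring
      _ = |((∫ t in (0:ℝ)..x, w t) + β * w x) - ∫ t in (0:ℝ)..x, w t| := by rw [← hwx]
      _ ≤ |(∫ t in (0:ℝ)..x, w t) + β * w x| + |∫ t in (0:ℝ)..x, w t| := abs_sub _ _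
      _ ≤ N' + N' := add_le_add hFx hWb
      _ = 2 * N' := by ring
    have hsn : eLpNorm u ⊤ (volume.restrict (Set.Ioo 0 1))
        = eLpNorm w ⊤ (volume.restrict (Set.Ioo 0 1)) := eLpNorm_congr_ae huw
    rw [hsn]
    calc eLpNorm w ⊤ (volume.restrict (Set.Ioo 0 1)) ≤ ENNReal.ofReal (2/β * N') := by
          have := eLpNorm_le_of_ae_bound (p := (⊤ : ℝ≥0∞)) hkey
          simpa using this
    _ = ENNReal.ofReal (2/β) * ENNReal.ofReal N' := ENNReal.ofReal_mul (by positivity)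
    _ = ENNReal.ofReal (2/β) * N := by rw [hN', ENNReal.ofReal_toReal hNt]
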